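/- Let i ∈ R(u,v) be a reduced word and {i,j} an edge of Π. Suppose A ≺ C ≺ C' are three vertices of the (i,j)-strip of Σ(i) such that c(A) = −c(C) and y(C) = −y(C'). Then there exists a vertex B of the strip with A ≺ B ⪯ C such that B is the left end of an inclined edge of the strip. -/

import Mathlib

open scoped Classical

namespace SLC

variable {V : Type*} [DecidableEq V]

/-- The simply-laced Coxeter matrix associated with a simple graph `P`:
`M i i = 1`, `M i j = 3` if `i` and `j` are adjacent, and `M i j = 2` otherwise. -/
noncomputable def coxeterMatrix (P : SimpleGraph V) : CoxeterMatrix V where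
  M := fun i j => if i = j then 1 else if P.Adj i j then 3 else 2
  isSymm := by
    ext i j
    change (if j = i then 1 else if P.Adj j i then 3 else 2) = (if i = j then 1 else if P.Adj i j then 3 else 2)
    by_cases h : i = j
    · subst h; rfl
    · rw [if_neg (Ne.symm h), if_neg h]
      by_cases ha : P.Adj i j
      · rw [if_pos ha.symm, if_pos ha]
      · rw [if_neg (fun hc => ha hc.symm), if_neg ha]
  diagonal := by intro i; simp
  off_diagonal := by
    intro i i' h
    change (if i = i' then 1 else if P.Adj i i' then 3 else 2) ≠ 1
    rw [if_neg h]
    split <;> omega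

/-- `e` is a reduced word for the pair `(u, v)`: the subword of entries with negative sign
(first component `false`), with signs forgotten, is a reduced word for `u`, and the subword of
entries with positive sign is a reduced word for `v`. -/
def IsRWordPair {W : Type*} [Group W] (P : SimpleGraph V)
    (cs : CoxeterSystem (coxeterMatrix P) W) (u v : W) {m : ℕ}
    (e : Fin m → Bool × V) : Prop :=
  cs.wordProd (((List.ofFn e).filter fun p => !p.1).map Prod.snd) = u ∧
    (((List.ofFn e).filter fun p => !p.1).map Prod.snd).length = cs.length u ∧
    cs.wordProd (((List.ofFn e).filter fun p => p.1).map Prod.snd) = v ∧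
    (((List.ofFn e).filter fun p => p.1).map Prod.snd).length = cs.length v

/-- `k = l⁻`: `k` is the largest index smaller than `l` carrying the same letter of `P`. -/
def IsPred {m : ℕ} (e : Fin m → Bool × V) (k l : Fin m) : Prop :=
  k < l ∧ (e k).2 = (e l).2 ∧ ∀ j, k < j → j < l → (e j).2 ≠ (e l).2

/-- The index `l` is `e`-bounded: `l⁻ > 0`, i.e. `l` has a predecessor. -/
def BoundedIdx {m : ℕ} (e : Fin m → Bool × V) (l : Fin m) : Prop :=
  ∃ k, IsPred e k l

/-- Conditions (ii) and (iii) of Definition 3.1 (inclined edges), for `k < l`. -/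
def InclCond {m : ℕ} (P : SimpleGraph V) (e : Fin m → Bool × V) (k l : Fin m) : Prop :=
  k < l ∧ P.Adj (e k).2 (e l).2 ∧
    ((∃ p, IsPred e p l ∧ p < k ∧ (∀ q, IsPred e q k → q < p) ∧ (e p).1 = (e k).1) ∨
     (∃ q, IsPred e q k ∧ (∀ p, IsPred e p l → p < q) ∧ (e q).1 = !(e k).1))

/-- `a → b` is a directed edge of the graph `Σ(e)`. -/
def DirEdge {m : ℕ} (P : SimpleGraph V) (e : Fin m → Bool × V) (a b : Fin m) : Prop :=
  (IsPred e a b ∧ (e a).1 = true) ∨ (IsPred e b a ∧ (e b).1 = false) ∨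
    (InclCond P e a b ∧ (e a).1 = false) ∨ (InclCond P e b a ∧ (e b).1 = true)

/-- `{a, b}` is an edge of the graph `Σ(e)` (in some direction). -/
def UEdge {m : ℕ} (P : SimpleGraph V) (e : Fin m → Bool × V) (a b : Fin m) : Prop :=
  DirEdge P e a b ∨ DirEdge P e b a

/-- Adjacency in the doubled graph `P̃`. -/
def TAdj (P : SimpleGraph V) (p q : Bool × V) : Prop :=
  p.1 = q.1 ∧ P.Adj p.2 q.2

/-- The negative of a letter of `P̃`. -/
def negEnt (p : Bool × V) : Bool × V := (!p.1, p.2)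

/-- The combinatorial data of a 2- or 3-move: the (consecutive) positions involved. -/
inductive MoveSpec (m : ℕ) where
  | two (a b : Fin m)
  | three (a b c : Fin m)

/-- The position of a move (the last of the positions involved). -/
def MoveSpec.pos {m : ℕ} : MoveSpec m → Fin m
  | .two _ b => b
  | .three _ _ c => c

/-- `e'` is obtained from `e` by the 2- or 3-move described by `s`. -/
def IsMove {m : ℕ} (P : SimpleGraph V) (e e' : Fin m → Bool × V) : MoveSpec m → Prop
  | .two a b => (b : ℕ) = (a : ℕ) + 1 ∧ ¬ TAdj P (e a) (e b) ∧
      e' a = e b ∧ e' b = e a ∧ ∀ l, l ≠ a → l ≠ b → e' l = e l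
  | .three a b c => (b : ℕ) = (a : ℕ) + 1 ∧ (c : ℕ) = (b : ℕ) + 1 ∧
      e c = e a ∧ TAdj P (e b) (e c) ∧
      e' a = e b ∧ e' b = e a ∧ e' c = e b ∧ ∀ l, l ≠ a → l ≠ b → l ≠ c → e' l = e l

/-- A move is trivial if it is a 2-move interchanging entries which are not opposite. -/
def MoveTrivial {m : ℕ} (e : Fin m → Bool × V) : MoveSpec m → Prop
  | .two a b => e b ≠ negEnt (e a)
  | .three _ _ _ => False

/-- The permutation `σ` associated with a move. -/
noncomputable def moveSigma {m : ℕ} (e : Fin m → Bool × V) : MoveSpec m → Equiv.Perm (Fin m)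
  | .two a b => if e b = negEnt (e a) then 1 else Equiv.swap a b
  | .three a b _ => Equiv.swap a b

/-- The skew-symmetric form `Ω` of the graph `Σ(e)`, over a commutative ring `R`. -/
noncomputable def omegaForm (R : Type*) [CommRing R] {m : ℕ} (P : SimpleGraph V)
    (e : Fin m → Bool × V) (x y : Fin m → R) : R :=
  ∑ a : Fin m, ∑ b : Fin m, if DirEdge P e a b then x a * y b - x b * y a else 0

/-- The symplectic transvection `τ_k` of the graph `Σ(e)`, over `R`. -/
noncomputable def transv (R : Type*) [CommRing R] {m : ℕ} (P : SimpleGraph V)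
    (e : Fin m → Bool × V) (k : Fin m) (x : Fin m → R) : Fin m → R :=
  x - omegaForm R P e x (Pi.single k 1) • (Pi.single k 1 : Fin m → R)

/-- The group `Γ_e ⊆ GL_m(ℤ)` generated by the transvections `τ_k`, `k ∈ B(e)`. -/
noncomputable def Gamma {m : ℕ} (P : SimpleGraph V) (e : Fin m → Bool × V) :
    Subgroup ((Fin m → ℤ) ≃ₗ[ℤ] (Fin m → ℤ)) :=
  Subgroup.closure {g | ∃ k, BoundedIdx e k ∧ ⇑g = transv ℤ P e k}

/-- The group `Γ_e(F₂)` of linear transformations of `F₂^m` generated by the reductions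
modulo 2 of the transvections `τ_k`, `k ∈ B(e)`. -/
noncomputable def GammaF2 {m : ℕ} (P : SimpleGraph V) (e : Fin m → Bool × V) :
    Subgroup (Equiv.Perm (Fin m → ZMod 2)) :=
  Subgroup.closure {g | ∃ k, BoundedIdx e k ∧ ⇑g = transv (ZMod 2) P e k}

/-- The map `φ⁺` associated with a move. -/
noncomputable def phiP {m : ℕ} (P : SimpleGraph V) (e : Fin m → Bool × V) (s : MoveSpec m)
    (x : Fin m → ℤ) : Fin m → ℤ := fun l =>
  if l = s.pos ∧ ¬ MoveTrivial e s then
    (∑ a : Fin m, if DirEdge P e a s.pos then x a else 0) - x s.pos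
  else x (moveSigma e s l)

/-- The map `φ⁻` associated with a move. -/
noncomputable def phiM {m : ℕ} (P : SimpleGraph V) (e : Fin m → Bool × V) (s : MoveSpec m)
    (x : Fin m → ℤ) : Fin m → ℤ := fun l =>
  if l = s.pos ∧ ¬ MoveTrivial e s then
    (∑ b : Fin m, if DirEdge P e s.pos b then x b else 0) - x s.pos
  else x (moveSigma e s l)


variable {V : Type*} [DecidableEq V] [Fintype V] {W : Type*} [Group W]

/-- Lemma 4.2: if `A ≺ C ≺ C'` are strip vertices with `c(A) = -c(C)` and `y(C) = -y(C')`,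
then some vertex `B` with `A ≺ B ⪯ C` is the left end of an inclined edge of the strip. -/
theorem exists_left_end_of_inclined (P : SimpleGraph V)
    (cs : CoxeterSystem (coxeterMatrix P) W)
    (u v : W) {m : ℕ} (hm : m = cs.length u + cs.length v)
    (e : Fin m → Bool × V) (he : IsRWordPair P cs u v e)
    (i j : V) (hij : P.Adj i j) (a c c' : Fin m)
    (ha : (e a).2 = i ∨ (e a).2 = j) (hc : (e c).2 = i ∨ (e c).2 = j)
    (hc' : (e c').2 = i ∨ (e c').2 = j)
    (hac : a < c) (hcc' : c < c')
    (hcharge : ((e a).2 = (e c).2) ↔ ¬ ((e a).1 = (e c).1))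
    (hlvl : (e c).2 ≠ (e c').2) :
    ∃ b d : Fin m, a < b ∧ b ≤ c ∧ ((e b).2 = i ∨ (e b).2 = j) ∧
      ((e d).2 = i ∨ (e d).2 = j) ∧ InclCond P e b d := by
  classical
  have hne : i ≠ j := hij.ne
  -- the charge of a strip vertex
  let chg : Fin m → Bool := fun k => xor (decide ((e k).2 = j)) (e k).1
  have hstrip_of : ∀ x y : Fin m, (e x).2 = (e y).2 →
      ((e y).2 = i ∨ (e y).2 = j) → ((e x).2 = i ∨ (e x).2 = j) :=
    fun x y hxy hy => hy.imp (fun h => hxy.trans h) (fun h => hxy.trans h)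
  have hkey : ∀ k l : Fin m, ((e k).2 = i ∨ (e k).2 = j) → ((e l).2 = i ∨ (e l).2 = j) →
      (chg k ≠ chg l ↔ (((e k).2 = (e l).2) ↔ ¬((e k).1 = (e l).1))) := by
    intro k l hk hl
    rcases hk with hk | hk <;> rcases hl with hl | hl <;>
      simp only [chg, hk, hl, hne, Ne.symm hne, decide_eq_true_eq] <;>
      cases hbk : (e k).1 <;> cases hbl : (e l).1 <;>
      simp [hne, Ne.symm hne]
  have hchg_ac : chg a ≠ chg c := (hkey a c ha hc).mpr hcharge
  -- b : first strip vertex after a (and ≤ c) of opposite charge to a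
  have hS1ne : (Finset.univ.filter fun x : Fin m =>
      a < x ∧ x ≤ c ∧ ((e x).2 = i ∨ (e x).2 = j) ∧ chg x ≠ chg a).Nonempty :=
    ⟨c, Finset.mem_filter.mpr ⟨Finset.mem_univ _, hac, le_refl _, hc, Ne.symm hchg_ac⟩⟩
  set b := (Finset.univ.filter fun x : Fin m =>
      a < x ∧ x ≤ c ∧ ((e x).2 = i ∨ (e x).2 = j) ∧ chg x ≠ chg a).min' hS1ne with hbdef
  have hbmem := Finset.mem_filter.mp ((Finset.univ.filter fun x : Fin m =>
      a < x ∧ x ≤ c ∧ ((e x).2 = i ∨ (e x).2 = j) ∧ chg x ≠ chg a).min'_mem hS1ne)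
  obtain ⟨-, hab, hbc, hb2, hchg_b⟩ := hbmem
  have hbmin : ∀ x : Fin m, a < x → x ≤ c → ((e x).2 = i ∨ (e x).2 = j) →
      chg x ≠ chg a → b ≤ x := fun x h1 h2 h3 h4 =>
    Finset.min'_le _ x (Finset.mem_filter.mpr ⟨Finset.mem_univ _, h1, h2, h3, h4⟩)
  -- z : last strip vertex before b
  have hS2ne : (Finset.univ.filter fun x : Fin m =>
      x < b ∧ ((e x).2 = i ∨ (e x).2 = j)).Nonempty :=
    ⟨a, Finset.mem_filter.mpr ⟨Finset.mem_univ _, hab, ha⟩⟩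
  set z := (Finset.univ.filter fun x : Fin m =>
      x < b ∧ ((e x).2 = i ∨ (e x).2 = j)).max' hS2ne with hzdef
  have hzmem := Finset.mem_filter.mp ((Finset.univ.filter fun x : Fin m =>
      x < b ∧ ((e x).2 = i ∨ (e x).2 = j)).max'_mem hS2ne)
  obtain ⟨-, hzb, hz2⟩ := hzmem
  have hzmax : ∀ x : Fin m, x < b → ((e x).2 = i ∨ (e x).2 = j) → x ≤ z :=
    fun x h1 h2 => Finset.le_max' _ x (Finset.mem_filter.mpr ⟨Finset.mem_univ _, h1, h2⟩)
  have haz : a ≤ z := hzmax a hab ha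
  have hchg_z : chg z = chg a := by
    rcases eq_or_lt_of_le haz with h | h
    · rw [← h]
    · by_contra hcon
      exact absurd (hbmin z h (le_of_lt (lt_of_lt_of_le hzb hbc)) hz2 hcon) (not_le.mpr hzb)
  have hchg_zb : chg z ≠ chg b := by
    rw [hchg_z]; exact Ne.symm hchg_b
  -- d : first strip vertex after b at the opposite level
  have hS3ne : (Finset.univ.filter fun x : Fin m =>
      b < x ∧ ((e x).2 = i ∨ (e x).2 = j) ∧ (e x).2 ≠ (e b).2).Nonempty := by
    by_cases hbc2 : (e b).2 = (e c).2
    · exact ⟨c', Finset.mem_filter.mpr ⟨Finset.mem_univ _, lt_of_le_of_lt hbc hcc', hc',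
        fun h => hlvl (hbc2 ▸ h.symm)⟩⟩
    · exact ⟨c, Finset.mem_filter.mpr ⟨Finset.mem_univ _,
        lt_of_le_of_ne hbc (fun h => hbc2 (by rw [h])), hc, fun h => hbc2 h.symm⟩⟩
  set d := (Finset.univ.filter fun x : Fin m =>
      b < x ∧ ((e x).2 = i ∨ (e x).2 = j) ∧ (e x).2 ≠ (e b).2).min' hS3ne with hddef
  have hdmem := Finset.mem_filter.mp ((Finset.univ.filter fun x : Fin m =>
      b < x ∧ ((e x).2 = i ∨ (e x).2 = j) ∧ (e x).2 ≠ (e b).2).min'_mem hS3ne)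
  obtain ⟨-, hbd, hd2, hd_ne⟩ := hdmem
  have hdmin : ∀ x : Fin m, b < x → ((e x).2 = i ∨ (e x).2 = j) → (e x).2 ≠ (e b).2 →
      d ≤ x := fun x h1 h2 h3 =>
    Finset.min'_le _ x (Finset.mem_filter.mpr ⟨Finset.mem_univ _, h1, h2, h3⟩)
  have hbd_ne : (e b).2 ≠ (e d).2 := Ne.symm hd_ne
  have hadj : P.Adj (e b).2 (e d).2 := by
    rcases hb2 with h1 | h1 <;> rcases hd2 with h2 | h2 <;> rw [h1, h2]
    · exact absurd (h1.trans h2.symm) hbd_ne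
    · exact hij
    · exact hij.symm
    · exact absurd (h1.trans h2.symm) hbd_ne
  have hzd : (e z).2 = (e b).2 ∨ (e z).2 = (e d).2 := by
    rcases hz2 with h | h <;> rcases hb2 with h1 | h1 <;> rcases hd2 with h2 | h2 <;>
      first
        | exact absurd (h1.trans h2.symm) hbd_ne
        | exact Or.inl (h.trans h1.symm)
        | exact Or.inr (h.trans h2.symm)
  refine ⟨b, d, hab, hbc, hb2, hd2, hbd, hadj, ?_⟩
  rcases hzd with hzlev | hzlev
  · -- z is at b's level : use condition (iii) with q = z
    right
    have hS5ne : (Finset.univ.filter fun x : Fin m =>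
        x < b ∧ (e x).2 = (e b).2).Nonempty :=
      ⟨z, Finset.mem_filter.mpr ⟨Finset.mem_univ _, hzb, hzlev⟩⟩
    set q := (Finset.univ.filter fun x : Fin m =>
        x < b ∧ (e x).2 = (e b).2).max' hS5ne with hqdef
    have hqmem := Finset.mem_filter.mp ((Finset.univ.filter fun x : Fin m =>
        x < b ∧ (e x).2 = (e b).2).max'_mem hS5ne)
    obtain ⟨-, hqb, hq2⟩ := hqmem
    have hqpred : IsPred e q b := by
      refine ⟨hqb, hq2, fun x hx1 hx2 hx3 => ?_⟩
      exact absurd (Finset.le_max' _ x (Finset.mem_filter.mpr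
        ⟨Finset.mem_univ _, hx2, hx3⟩)) (not_le.mpr hx1)
    have hqz : q = z := by
      refine le_antisymm (hzmax q hqb (hstrip_of q b hq2 hb2))
        (Finset.le_max' _ z (Finset.mem_filter.mpr ⟨Finset.mem_univ _, hzb, hzlev⟩))
    refine ⟨q, hqpred, ?_, ?_⟩
    · intro p hp
      have hp2 : (e p).2 = (e d).2 := hp.2.1
      have hpb : p < b := by
        rcases lt_trichotomy p b with h | h | h
        · exact h
        · exact absurd (h ▸ hp2) hbd_ne
        · exact absurd (hdmin p h (hstrip_of p d hp2 hd2)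
            (fun hh => hbd_ne (hh.symm.trans hp2))) (not_le.mpr hp.1)
      have hpz : p ≤ z := hzmax p hpb (hstrip_of p d hp2 hd2)
      refine lt_of_le_of_ne (hqz ▸ hpz) ?_
      intro h
      rw [h] at hp2
      exact hbd_ne (hq2.symm.trans hp2)
    · have hsame : (e q).2 = (e b).2 := hq2
      have := (hkey q b (hstrip_of q b hq2 hb2) hb2).mp (hqz ▸ hchg_zb)
      have hsign : ¬((e q).1 = (e b).1) := this.mp hsame
      revert hsign; cases (e q).1 <;> cases (e b).1 <;> decide
  · -- z is at d's level : use condition (ii) with p = z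
    left
    have hS4ne : (Finset.univ.filter fun x : Fin m =>
        x < d ∧ (e x).2 = (e d).2).Nonempty :=
      ⟨z, Finset.mem_filter.mpr ⟨Finset.mem_univ _, lt_trans hzb hbd, hzlev⟩⟩
    set p := (Finset.univ.filter fun x : Fin m =>
        x < d ∧ (e x).2 = (e d).2).max' hS4ne with hpdef
    have hpmem := Finset.mem_filter.mp ((Finset.univ.filter fun x : Fin m =>
        x < d ∧ (e x).2 = (e d).2).max'_mem hS4ne)
    obtain ⟨-, hpd, hp2⟩ := hpmem
    have hppred : IsPred e p d := by
      refine ⟨hpd, hp2, fun x hx1 hx2 hx3 => ?_⟩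
      exact absurd (Finset.le_max' _ x (Finset.mem_filter.mpr
        ⟨Finset.mem_univ _, hx2, hx3⟩)) (not_le.mpr hx1)
    have hpb : p < b := by
      rcases lt_trichotomy p b with h | h | h
      · exact h
      · exact absurd (h ▸ hp2) hbd_ne
      · exact absurd (hdmin p h (hstrip_of p d hp2 hd2)
          (fun hh => hbd_ne (hh.symm.trans hp2))) (not_le.mpr hpd)
    have hpz : p = z := by
      refine le_antisymm (hzmax p hpb (hstrip_of p d hp2 hd2))
        (Finset.le_max' _ z (Finset.mem_filter.mpr
          ⟨Finset.mem_univ _, lt_trans hzb hbd, hzlev⟩))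
    refine ⟨p, hppred, hpb, ?_, ?_⟩
    · intro q hq
      have hq2 : (e q).2 = (e b).2 := hq.2.1
      have hqz : q ≤ z := hzmax q hq.1 (hstrip_of q b hq2 hb2)
      refine lt_of_le_of_ne (hpz ▸ hqz) ?_
      intro h
      exact hbd_ne ((h ▸ hq2).symm.trans hp2)
    · have hdiff : (e p).2 ≠ (e b).2 := fun h => hbd_ne (h.symm.trans hp2)
      have := (hkey p b (hstrip_of p d hp2 hd2) hb2).mp (hpz ▸ hchg_zb)
      by_contra hcon
      exact hdiff (this.mpr hcon)

end SLC
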